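/- In the combinatorial horoball based on a graph Λ, for any level m ≥ 0 and vertices x, y of Λ, if the distance between (x,m) and (y,m) within the level-m subgraph (whose edges join vertices at Λ-distance at most 2^m) equals D, then the distance between (x,m+1) and (y,m+1) within the level-(m+1) subgraph equals ⌈D/2⌉. -/

import Mathlib

/-- The combinatorial horoball based on a graph `Λ`: vertices are `Λ⁰ × ℕ`,
vertical edges join `(v,n)` to `(v,n+1)`, horizontal edges join `(v,n)` to `(w,n)`
whenever `0 < d_Λ(v,w) ≤ 2^n`. -/
def horoball {V : Type*} (Λ : SimpleGraph V) : SimpleGraph (V × ℕ) where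
  Adj a b := (a.1 = b.1 ∧ (a.2 + 1 = b.2 ∨ b.2 + 1 = a.2)) ∨
    (a.2 = b.2 ∧ a.1 ≠ b.1 ∧ Λ.dist a.1 b.1 ≤ 2 ^ a.2)
  symm := by
    constructor
    rintro ⟨x, m⟩ ⟨y, k⟩ (⟨h1, h2⟩ | ⟨h1, h2, h3⟩)
    · exact Or.inl ⟨h1.symm, h2.symm⟩
    · exact Or.inr ⟨h1.symm, h2.symm, by rwa [SimpleGraph.dist_comm, ← h1]⟩
  loopless := by
    constructor
    rintro ⟨x, m⟩ (⟨_, h⟩ | ⟨_, h, _⟩) <;> simp_all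

/-- The level-`n` subgraph of the combinatorial horoball on `Λ`, identified with a graph
on the vertices of `Λ`: it is the Rips graph `Rips_{2^n}(Λ)`, whose edges join distinct
vertices at `Λ`-distance at most `2^n`. -/
def ripsLevel {V : Type*} (Λ : SimpleGraph V) (n : ℕ) : SimpleGraph V where
  Adj v w := v ≠ w ∧ Λ.dist v w ≤ 2 ^ n
  symm := ⟨fun v w h => ⟨h.1.symm, by rw [SimpleGraph.dist_comm]; exact h.2⟩⟩
  loopless := ⟨fun v h => h.1 rfl⟩


section Aux
open SimpleGraph

-- walk vertex bounds
lemma dist_getVert_le {V : Type*} {Λ : SimpleGraph V} (hΛ : Λ.Connected)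
    {u v : V} (p : Λ.Walk u v) (i : ℕ) : Λ.dist u (p.getVert i) ≤ i := by
  induction p generalizing i with
  | nil => rw [Walk.getVert_of_length_le _ (Nat.zero_le i), SimpleGraph.dist_self]; exact Nat.zero_le i
  | cons h q ih =>
    cases i with
    | zero => simp [Walk.getVert]
    | succ i =>
      calc Λ.dist _ _ ≤ Λ.dist _ _ + Λ.dist _ ((q.cons h).getVert (i+1)) :=
            hΛ.dist_triangle
        _ ≤ 1 + i := by
            have h1 : Λ.dist _ _ ≤ (Walk.cons h Walk.nil).length := Λ.dist_le _
            simpa [Walk.getVert_cons_succ] using Nat.add_le_add h1 (ih i)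
        _ = i + 1 := Nat.add_comm 1 i

lemma dist_getVert_right_le {V : Type*} {Λ : SimpleGraph V}
    {u v : V} (p : Λ.Walk u v) (i : ℕ) : Λ.dist (p.getVert i) v ≤ p.length - i := by
  induction p generalizing i with
  | nil => rw [Walk.getVert_of_length_le _ (Nat.zero_le i), SimpleGraph.dist_self]; exact Nat.zero_le _
  | cons h q ih =>
    cases i with
    | zero =>
      simpa [Walk.getVert] using Λ.dist_le (Walk.cons h q)
    | succ i =>
      simpa [Walk.getVert_cons_succ] using ih i

lemma le_ripsLevel {V : Type*} (Λ : SimpleGraph V) (n : ℕ) : Λ ≤ ripsLevel Λ n := by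
  intro v w h
  exact ⟨h.ne, by rw [SimpleGraph.dist_eq_one_iff_adj.2 h]; exact Nat.one_le_two_pow⟩

lemma ripsLevel_connected {V : Type*} {Λ : SimpleGraph V} (hΛ : Λ.Connected) (n : ℕ) :
    (ripsLevel Λ n).Connected := hΛ.mono (le_ripsLevel Λ n)

-- lower bound: Λ.dist x y ≤ L * 2^n for any rips walk of length L
lemma lam_dist_le_walk {V : Type*} {Λ : SimpleGraph V} (hΛ : Λ.Connected) (n : ℕ)
    {x y : V} (q : (ripsLevel Λ n).Walk x y) : Λ.dist x y ≤ q.length * 2 ^ n := by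
  induction q with
  | nil => simp
  | cons h q ih =>
    calc Λ.dist _ _ ≤ Λ.dist _ _ + Λ.dist _ _ := hΛ.dist_triangle
      _ ≤ 2 ^ n + q.length * 2 ^ n := Nat.add_le_add h.2 ih
      _ = (q.cons h).length * 2 ^ n := by rw [Walk.length_cons]; ring

-- upper bound
lemma rips_dist_le {V : Type*} {Λ : SimpleGraph V} (hΛ : Λ.Connected) (n : ℕ)
    (d : ℕ) : ∀ x y : V, Λ.dist x y ≤ d →
    (ripsLevel Λ n).dist x y ≤ (d + (2 ^ n - 1)) / 2 ^ n := by
  induction d using Nat.strong_induction_on with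
  | _ d ih =>
    intro x y hxy
    rcases eq_or_ne x y with rfl | hne
    · simp [SimpleGraph.dist_self]
    have hd0 : 0 < Λ.dist x y := hΛ.pos_dist_of_ne hne
    have hk : 0 < 2 ^ n := Nat.pow_pos (by norm_num)
    by_cases hsmall : Λ.dist x y ≤ 2 ^ n
    · have hadj : (ripsLevel Λ n).Adj x y := ⟨hne, hsmall⟩
      have h1 : (ripsLevel Λ n).dist x y ≤ 1 := by
        rw [SimpleGraph.dist_eq_one_iff_adj.2 hadj]
      refine h1.trans ?_
      have : 2 ^ n ≤ d + (2 ^ n - 1) := by omega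
      exact Nat.le_div_iff_mul_le hk |>.2 (by omega)
    · push_neg at hsmall
      obtain ⟨p, hp⟩ := hΛ.exists_walk_length_eq_dist x y
      obtain ⟨z, hz⟩ : ∃ z, z = p.getVert (2 ^ n) := ⟨_, rfl⟩
      have hxz : Λ.dist x z ≤ 2 ^ n := hz ▸ dist_getVert_le hΛ p _
      have hzy : Λ.dist z y ≤ Λ.dist x y - 2 ^ n := by
        have := dist_getVert_right_le p (2 ^ n)
        rw [hp] at this
        rwa [hz]
      have hxz_ne : x ≠ z := by
        rintro rfl
        have : Λ.dist x y ≤ Λ.dist x y - 2 ^ n := hzy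
        omega
      have hstep : (ripsLevel Λ n).dist x z ≤ 1 := by
        rw [SimpleGraph.dist_eq_one_iff_adj.2 (⟨hxz_ne, hxz⟩ : (ripsLevel Λ n).Adj x z)]
      have hIH : (ripsLevel Λ n).dist z y ≤ (d - 2 ^ n + (2 ^ n - 1)) / 2 ^ n := by
        refine ih (d - 2 ^ n) (by omega) z y (by omega)
      calc (ripsLevel Λ n).dist x y
          ≤ (ripsLevel Λ n).dist x z + (ripsLevel Λ n).dist z y :=
            (ripsLevel_connected hΛ n).dist_triangle
        _ ≤ 1 + (d - 2 ^ n + (2 ^ n - 1)) / 2 ^ n := Nat.add_le_add hstep hIH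
        _ ≤ (d + (2 ^ n - 1)) / 2 ^ n := by
            have h1 : d + (2 ^ n - 1) = (d - 2 ^ n + (2 ^ n - 1)) + 2 ^ n := by omega
            rw [h1, Nat.add_div_right _ hk, Nat.add_comm]

lemma rips_dist_eq {V : Type*} {Λ : SimpleGraph V} (hΛ : Λ.Connected) (n : ℕ) (x y : V) :
    (ripsLevel Λ n).dist x y = (Λ.dist x y + (2 ^ n - 1)) / 2 ^ n := by
  have hk : 0 < 2 ^ n := Nat.pow_pos (by norm_num)
  refine Nat.le_antisymm (rips_dist_le hΛ n _ x y le_rfl) ?_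
  obtain ⟨q, hq⟩ := (ripsLevel_connected hΛ n).exists_walk_length_eq_dist x y
  have h1 : Λ.dist x y ≤ q.length * 2 ^ n := lam_dist_le_walk hΛ n q
  rw [← hq]
  rw [Nat.div_le_iff_le_mul_add_pred hk]
  calc Λ.dist x y + (2 ^ n - 1) ≤ q.length * 2 ^ n + (2 ^ n - 1) := by omega
    _ = 2 ^ n * q.length + (2 ^ n - 1) := by ring_nf

-- arithmetic: ceil of ceil
lemma ceil_ceil (a k : ℕ) (hk : 0 < k) :
    ((a + (k - 1)) / k + 1) / 2 = (a + (2 * k - 1)) / (2 * k) := by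
  rcases Nat.eq_zero_or_pos a with rfl | ha
  · have h1 : (k - 1) / k = 0 := Nat.div_eq_of_lt (by omega)
    have h2 : (2 * k - 1) / (2 * k) = 0 := Nat.div_eq_of_lt (by omega)
    rw [Nat.zero_add, Nat.zero_add, h1, h2]
  · have h1 : a + (k - 1) = (a - 1) + k := by omega
    have h2 : a + (2 * k - 1) = (a - 1) + 2 * k := by omega
    rw [h1, h2, Nat.add_div_right _ hk, Nat.add_div_right _ (by omega)]
    rw [show (a - 1) / k + 1 + 1 = (a - 1) / k + 2 by ring, Nat.add_div_right _ (by norm_num)]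
    rw [Nat.div_div_eq_div_mul, Nat.mul_comm k 2]

end Aux

/-- If the distance between `(x,m)` and `(y,m)` within the level-`m` subgraph of the
combinatorial horoball is `D`, then the distance between `(x,m+1)` and `(y,m+1)` within
the level-`(m+1)` subgraph is `⌈D/2⌉`. -/
theorem level_dist_halves {V : Type*} (Λ : SimpleGraph V) (hΛ : Λ.Connected)
    (m : ℕ) (x y : V) (D : ℕ) (hD : (ripsLevel Λ m).dist x y = D) :
    (ripsLevel Λ (m + 1)).dist x y = (D + 1) / 2 := by
  have hk : 0 < 2 ^ m := Nat.pow_pos (by norm_num)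
  rw [rips_dist_eq hΛ (m + 1) x y, ← hD, rips_dist_eq hΛ m x y,
    ceil_ceil _ _ hk, pow_succ, Nat.mul_comm]
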